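/- arXiv:1903.10437 — 2 statements merged into one kernel-verified Lean document; each statement's English description precedes it below -/
import Mathlib

section
/- Let $\sigma \geq 0$, $\theta \in [0,1]$, and $\eta_1, \eta_2 \in \mathbb{R}$. Then $e^{\sigma(|\eta_1| + |\eta_2|)} - e^{\sigma|\eta_1 + \eta_2|} \leq \left(2\sigma \min(|\eta_1|, |\eta_2|)\right)^{\theta} e^{\sigma(|\eta_1| + |\eta_2|)}$. -/
theorem exp_weight_diff_two (σ θ η₁ η₂ : ℝ) (hσ : 0 ≤ σ) (hθ₀ : 0 ≤ θ) (hθ₁ : θ ≤ 1) :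
    Real.exp (σ * (|η₁| + |η₂|)) - Real.exp (σ * |η₁ + η₂|) ≤
      (2 * σ * min |η₁| |η₂|) ^ θ * Real.exp (σ * (|η₁| + |η₂|)) := by
  set A := σ * (|η₁| + |η₂|) with hA
  set B := σ * |η₁ + η₂| with hB
  set d := 2 * σ * min |η₁| |η₂| with hd
  have habs : |η₁| + |η₂| - |η₁ + η₂| ≤ 2 * min |η₁| |η₂| := by
    rcases le_total |η₁| |η₂| with h | h
    · have := abs_sub_abs_le_abs_sub (η₁ + η₂) η₁
      simp at this
      rw [min_eq_left h]
      linarith [(abs_sub_abs_le_abs_sub η₂ (η₁ + η₂)).trans (by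
        rw [show η₂ - (η₁ + η₂) = -η₁ by ring, abs_neg])]
    · rw [min_eq_right h]
      linarith [(abs_sub_abs_le_abs_sub η₁ (η₁ + η₂)).trans (by
        rw [show η₁ - (η₁ + η₂) = -η₂ by ring, abs_neg])]
  have hAB : 0 ≤ A - B := by
    have : |η₁ + η₂| ≤ |η₁| + |η₂| := abs_add_le _ _
    have := mul_le_mul_of_nonneg_left this hσ
    simp only [hA, hB]; linarith
  have hdn : 0 ≤ d := by
    have : 0 ≤ min |η₁| |η₂| := le_min (abs_nonneg _) (abs_nonneg _)
    positivity
  have hABd : A - B ≤ d := by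
    have := mul_le_mul_of_nonneg_left habs hσ
    simp only [hA, hB, hd]; nlinarith
  -- exp A - exp B ≤ min 1 (A-B) * exp A
  have key : Real.exp A - Real.exp B ≤ min 1 (A - B) * Real.exp A := by
    have h1 : Real.exp B = Real.exp A * Real.exp (B - A) := by
      rw [← Real.exp_add]; ring_nf
    have h2 : 1 - (A - B) ≤ Real.exp (B - A) := by
      have := Real.add_one_le_exp (B - A); linarith
    have h3 : (0:ℝ) ≤ Real.exp (B - A) := (Real.exp_pos _).le
    rcases min_cases 1 (A - B) with ⟨he, _⟩ | ⟨he, _⟩ <;> rw [he] <;>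
      nlinarith [Real.exp_pos A]
  have key2 : min 1 (A - B) ≤ (A - B) ^ θ := by
    rcases le_total (A - B) 1 with h | h
    · rw [min_eq_right h]
      calc A - B = (A - B) ^ (1:ℝ) := (Real.rpow_one _).symm
        _ ≤ (A - B) ^ θ := Real.rpow_le_rpow_of_exponent_ge' hAB h hθ₀ hθ₁
    · rw [min_eq_left h]
      calc (1:ℝ) = 1 ^ θ := (Real.one_rpow _).symm
        _ ≤ (A - B) ^ θ := Real.rpow_le_rpow zero_le_one h hθ₀
  have key3 : (A - B) ^ θ ≤ d ^ θ := Real.rpow_le_rpow hAB hABd hθ₀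
  calc Real.exp A - Real.exp B ≤ min 1 (A - B) * Real.exp A := key
    _ ≤ d ^ θ * Real.exp A := by
        apply mul_le_mul_of_nonneg_right (key2.trans key3) (Real.exp_pos A).le
end

section
/- Let $n \geq 2$ be a natural number, $\sigma \geq 0$, $\theta \in [0,1]$, and $\eta_1, \ldots, \eta_n \in \mathbb{R}$. Then $e^{\sigma \sum_{j=1}^n |\eta_j|} - e^{\sigma |\sum_{j=1}^n \eta_j|} \leq \sum_{k=1}^n \left(2\sigma \min\left(\left|\sum_{j \neq k} \eta_j\right|, |\eta_k|\right)\right)^{\theta} e^{\sigma \sum_{j=1}^n |\eta_j|}$. -/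
open Finset in
private lemma min_one_le_rpow {x θ : ℝ} (hx : 0 ≤ x) (hθ0 : 0 ≤ θ) (hθ1 : θ ≤ 1) :
    min 1 x ≤ x ^ θ := by
  rcases le_total x 1 with h | h
  · rcases eq_or_lt_of_le hx with h0 | h0
    · rw [← h0]
      simpa using Real.rpow_nonneg le_rfl θ
    · calc min 1 x ≤ x := min_le_right _ _
        _ = x ^ (1:ℝ) := (Real.rpow_one x).symm
        _ ≤ x ^ θ := Real.rpow_le_rpow_of_exponent_ge h0 h hθ1
  · calc min 1 x ≤ 1 := min_le_left _ _
      _ = x ^ (0:ℝ) := (Real.rpow_zero x).symm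
      _ ≤ x ^ θ := Real.rpow_le_rpow_of_exponent_le h hθ0

open Finset in
theorem exp_weight_diff (n : ℕ) (hn : 2 ≤ n) (σ θ : ℝ) (hσ : 0 ≤ σ)
    (hθ₀ : 0 ≤ θ) (hθ₁ : θ ≤ 1) (η : Fin n → ℝ) :
    Real.exp (σ * ∑ j, |η j|) - Real.exp (σ * |∑ j, η j|) ≤
      ∑ k, (2 * σ * min |∑ j ∈ univ.erase k, η j| |η k|) ^ θ *
        Real.exp (σ * ∑ j, |η j|) := by
  set S := ∑ j, |η j| with hS
  set T := ∑ j, η j with hT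
  have hTS : |T| ≤ S := Finset.abs_sum_le_sum_abs _ _
  have herase : ∀ k : Fin n, ∑ j ∈ univ.erase k, η j = T - η k := fun k =>
    Finset.sum_erase_eq_sub (mem_univ k)
  set m : Fin n → ℝ := fun k => min |T - η k| |η k| with hm
  have hm0 : ∀ k, 0 ≤ m k := fun k => le_min (abs_nonneg _) (abs_nonneg _)
  -- key combinatorial inequality
  have key : S - |T| ≤ ∑ k, 2 * m k := by
    have h1 : ∀ k, |η k| + |T - η k| - |T| ≤ 2 * m k := by
      intro k
      have ha : |η k| ≤ |T| + |T - η k| := by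
        calc |η k| = |T - (T - η k)| := by congr 1; ring
          _ ≤ |T| + |T - η k| := abs_sub _ _
      have hb : |T - η k| ≤ |T| + |η k| := abs_sub _ _
      rcases le_total |T - η k| |η k| with h | h
      · have hmk : m k = |T - η k| := min_eq_left h
        linarith
      · have hmk : m k = |η k| := min_eq_right h
        linarith
    have h2 : (n : ℝ) * |T| - |T| ≤ ∑ k, |T - η k| := by
      have : |∑ k : Fin n, (T - η k)| ≤ ∑ k, |T - η k| :=
        Finset.abs_sum_le_sum_abs _ _
      have hsum : ∑ k : Fin n, (T - η k) = (n : ℝ) * T - T := by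
        rw [Finset.sum_sub_distrib, Finset.sum_const, card_univ, Fintype.card_fin,
          nsmul_eq_mul]
      rw [hsum] at this
      have hn1 : (0:ℝ) ≤ (n:ℝ) - 1 := by
        have : (2:ℝ) ≤ n := by exact_mod_cast hn
        linarith
      calc (n : ℝ) * |T| - |T| = ((n:ℝ) - 1) * |T| := by ring
        _ = |((n:ℝ) - 1) * T| := by rw [abs_mul, abs_of_nonneg hn1]
        _ = |(n:ℝ) * T - T| := by congr 1; ring
        _ ≤ _ := this
    calc S - |T| ≤ S + (∑ k, |T - η k|) - (n : ℝ) * |T| := by linarith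
      _ = ∑ k, (|η k| + |T - η k| - |T|) := by
          rw [Finset.sum_sub_distrib, Finset.sum_add_distrib, Finset.sum_const,
            card_univ, Fintype.card_fin, nsmul_eq_mul, hS]
      _ ≤ ∑ k, 2 * m k := Finset.sum_le_sum fun k _ => h1 k
  -- exponential bound
  have hd : 0 ≤ σ * (S - |T|) := mul_nonneg hσ (by linarith)
  have hexp : Real.exp (σ * S) - Real.exp (σ * |T|) ≤
      min 1 (σ * (S - |T|)) * Real.exp (σ * S) := by
    have hfac : Real.exp (σ * |T|) = Real.exp (σ * S) * Real.exp (-(σ * (S - |T|))) := by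
      rw [← Real.exp_add]; ring_nf
    rw [hfac]
    have h1e : 1 - Real.exp (-(σ * (S - |T|))) ≤ min 1 (σ * (S - |T|)) := by
      refine le_min ?_ ?_
      · have := Real.exp_pos (-(σ * (S - |T|))); linarith
      · have := Real.add_one_le_exp (-(σ * (S - |T|))); linarith
    nlinarith [Real.exp_pos (σ * S), h1e]
  -- distribute min over the sum
  have hmin : min 1 (σ * (S - |T|)) ≤ ∑ k, min 1 (2 * σ * m k) := by
    by_cases hbig : ∃ k, 1 ≤ 2 * σ * m k
    · obtain ⟨k, hk⟩ := hbig
      calc min 1 (σ * (S - |T|)) ≤ 1 := min_le_left _ _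
        _ = min 1 (2 * σ * m k) := (min_eq_left hk).symm
        _ ≤ _ := Finset.single_le_sum
            (fun i _ => le_min zero_le_one (mul_nonneg (by positivity) (hm0 i))) (mem_univ k)
    · push_neg at hbig
      have : ∑ k, min 1 (2 * σ * m k) = ∑ k, 2 * σ * m k :=
        Finset.sum_congr rfl fun k _ => min_eq_right (le_of_lt (hbig k))
      rw [this]
      calc min 1 (σ * (S - |T|)) ≤ σ * (S - |T|) := min_le_right _ _
        _ ≤ σ * ∑ k, 2 * m k := by
            apply mul_le_mul_of_nonneg_left key hσ
        _ = ∑ k, 2 * σ * m k := by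
            rw [Finset.mul_sum]
            exact Finset.sum_congr rfl fun k _ => by ring
  -- finish
  calc Real.exp (σ * S) - Real.exp (σ * |T|)
      ≤ min 1 (σ * (S - |T|)) * Real.exp (σ * S) := hexp
    _ ≤ (∑ k, min 1 (2 * σ * m k)) * Real.exp (σ * S) := by
        apply mul_le_mul_of_nonneg_right hmin (Real.exp_pos _).le
    _ = ∑ k, min 1 (2 * σ * m k) * Real.exp (σ * S) := by rw [Finset.sum_mul]
    _ ≤ ∑ k, (2 * σ * min |∑ j ∈ univ.erase k, η j| |η k|) ^ θ * Real.exp (σ * S) := by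
        apply Finset.sum_le_sum
        intro k _
        apply mul_le_mul_of_nonneg_right _ (Real.exp_pos _).le
        rw [herase k]
        exact min_one_le_rpow (by positivity) hθ₀ hθ₁
end
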